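/- Fix σ^B > 0 and T > 0, and for m ∈ ℝ let C(m) = ∫_m^∞ (x − m)ψ(x) dx and P(m) = ∫_{−∞}^m (m − x)ψ(x) dx, where ψ is the centered Gaussian density with variance (σ^B)²T. Then: (i) C(−m) = P(m) for all m; (ii) C is strictly decreasing from ℝ onto ℝ_{>0} and P strictly increasing from ℝ onto ℝ_{>0}; (iii) there exists a strictly decreasing self-inverse function I: ℝ_{>0} → ℝ_{>0} (i.e. I ∘ I = id) such that P(m) = I(C(m)) for all m ∈ ℝ. -/

import Mathlib

open MeasureTheory

/-- The density of `S_T − S₀` in the Bachelier model: the centered Gaussian density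
with variance `σ²T`. -/
noncomputable def bachelierPsi (σ T x : ℝ) : ℝ :=
  (σ * Real.sqrt (2 * Real.pi * T))⁻¹ * Real.exp (-x ^ 2 / (2 * σ ^ 2 * T))

/-- Bachelier call price as a function of `m = K − S₀`. -/
noncomputable def bachelierCall (σ T m : ℝ) : ℝ :=
  ∫ x in Set.Ioi m, (x - m) * bachelierPsi σ T x

/-- Bachelier put price as a function of `m = K − S₀`. -/
noncomputable def bachelierPut (σ T m : ℝ) : ℝ :=
  ∫ x in Set.Iic m, (m - x) * bachelierPsi σ T x

namespace BachelierAux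

variable {σ T : ℝ}

lemma psi_pos (hσ : 0 < σ) (hT : 0 < T) (x : ℝ) : 0 < bachelierPsi σ T x := by
  unfold bachelierPsi
  have hπ := Real.pi_pos
  have h2 : 0 < 2 * Real.pi * T := by positivity
  have h3 : 0 < Real.sqrt (2 * Real.pi * T) := Real.sqrt_pos.mpr h2
  positivity

lemma psi_even (σ T x : ℝ) : bachelierPsi σ T (-x) = bachelierPsi σ T x := by
  simp [bachelierPsi, neg_sq]

lemma psi_continuous (σ T : ℝ) : Continuous (bachelierPsi σ T) := by
  unfold bachelierPsi
  fun_prop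

lemma psi_eq (hσ : 0 < σ) (hT : 0 < T) (x : ℝ) :
    bachelierPsi σ T x
      = (σ * Real.sqrt (2 * Real.pi * T))⁻¹ * Real.exp (-(2 * σ ^ 2 * T)⁻¹ * x ^ 2) := by
  unfold bachelierPsi
  congr 1
  rw [div_eq_mul_inv]
  ring_nf

lemma integrable_psi (hσ : 0 < σ) (hT : 0 < T) : Integrable (bachelierPsi σ T) := by
  have hb : (0:ℝ) < (2 * σ ^ 2 * T)⁻¹ := by positivity
  have h := (integrable_exp_neg_mul_sq hb).const_mul (σ * Real.sqrt (2 * Real.pi * T))⁻¹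
  exact h.congr (Filter.Eventually.of_forall fun x => (psi_eq hσ hT x).symm)

lemma integrable_abs_mul_psi (hσ : 0 < σ) (hT : 0 < T) :
    Integrable (fun x => |x| * bachelierPsi σ T x) := by
  have hb : (0:ℝ) < (2 * σ ^ 2 * T)⁻¹ := by positivity
  have h := (integrable_mul_exp_neg_mul_sq hb).abs.const_mul (σ * Real.sqrt (2 * Real.pi * T))⁻¹
  refine h.congr (Filter.Eventually.of_forall fun x => ?_)
  dsimp only
  rw [psi_eq hσ hT, abs_mul, abs_of_pos (Real.exp_pos _)]
  ring

lemma integrable_sq_mul_psi (hσ : 0 < σ) (hT : 0 < T) :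
    Integrable (fun x => x ^ 2 * bachelierPsi σ T x) := by
  have hb : (0:ℝ) < (2 * σ ^ 2 * T)⁻¹ := by positivity
  have h0 := integrable_rpow_mul_exp_neg_mul_sq hb (s := 2) (by norm_num)
  have h := h0.const_mul (σ * Real.sqrt (2 * Real.pi * T))⁻¹
  refine h.congr (Filter.Eventually.of_forall fun x => ?_)
  dsimp only
  rw [psi_eq hσ hT, Real.rpow_two]
  ring

lemma integrable_payoff (hσ : 0 < σ) (hT : 0 < T) (m : ℝ) :
    Integrable (fun x => max (x - m) 0 * bachelierPsi σ T x) := by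
  have hbound : Integrable (fun x => |x| * bachelierPsi σ T x + |m| * bachelierPsi σ T x) :=
    (integrable_abs_mul_psi hσ hT).add ((integrable_psi hσ hT).const_mul |m|)
  refine hbound.mono' ?_ (Filter.Eventually.of_forall fun x => ?_)
  · exact (Continuous.mul (by fun_prop) (psi_continuous σ T)).aestronglyMeasurable
  · have hψ := (psi_pos hσ hT x).le
    have h1 : |max (x - m) 0| ≤ |x| + |m| := by
      rw [abs_of_nonneg (le_max_right _ _)]
      refine max_le ?_ (by positivity)
      have hx := le_abs_self x
      have hm := neg_abs_le m
      linarith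
    rw [Real.norm_eq_abs, abs_mul, abs_of_nonneg hψ]
    calc |max (x - m) 0| * bachelierPsi σ T x ≤ (|x| + |m|) * bachelierPsi σ T x :=
          mul_le_mul_of_nonneg_right h1 hψ
      _ = |x| * bachelierPsi σ T x + |m| * bachelierPsi σ T x := by ring

lemma call_eq (hσ : 0 < σ) (hT : 0 < T) (m : ℝ) :
    bachelierCall σ T m = ∫ x, max (x - m) 0 * bachelierPsi σ T x := by
  rw [bachelierCall,
    ← setIntegral_eq_integral_of_forall_compl_eq_zero
      (s := Set.Ioi m) (f := fun x => max (x - m) 0 * bachelierPsi σ T x) ?_]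
  · refine setIntegral_congr_fun measurableSet_Ioi fun x hx => ?_
    rw [max_eq_left (by simp only [Set.mem_Ioi] at hx; linarith)]
  · intro x hx
    simp only [Set.mem_Ioi, not_lt] at hx
    rw [max_eq_right (by linarith), zero_mul]

lemma psi_integral_Ioi_pos (hσ : 0 < σ) (hT : 0 < T) (t : ℝ) :
    0 < ∫ x in Set.Ioi t, bachelierPsi σ T x := by
  have hInt : IntegrableOn (bachelierPsi σ T) (Set.Ioi t) := (integrable_psi hσ hT).integrableOn
  rw [setIntegral_pos_iff_support_of_nonneg_ae
    (Filter.Eventually.of_forall fun x => (psi_pos hσ hT x).le) hInt]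
  have hsup : Function.support (bachelierPsi σ T) = Set.univ :=
    Set.eq_univ_of_forall fun x => (psi_pos hσ hT x).ne'
  rw [hsup, Set.univ_inter, Real.volume_Ioi]
  exact ENNReal.zero_lt_top

lemma call_strictAnti (hσ : 0 < σ) (hT : 0 < T) : StrictAnti (bachelierCall σ T) := by
  intro m m' hmm'
  have hint_m := integrable_payoff hσ hT m
  have hint_m' := integrable_payoff hσ hT m'
  rw [call_eq hσ hT m, call_eq hσ hT m', ← sub_pos, ← integral_sub hint_m hint_m']
  have hd : ∀ x, 0 ≤ max (x - m) 0 * bachelierPsi σ T x - max (x - m') 0 * bachelierPsi σ T x := by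
    intro x
    have : max (x - m') 0 ≤ max (x - m) 0 := max_le_max (by linarith) le_rfl
    have := mul_le_mul_of_nonneg_right this (psi_pos hσ hT x).le
    linarith
  have h1 : ∫ x in Set.Ioi m',
      (max (x - m) 0 * bachelierPsi σ T x - max (x - m') 0 * bachelierPsi σ T x)
      ≤ ∫ x, (max (x - m) 0 * bachelierPsi σ T x - max (x - m') 0 * bachelierPsi σ T x) :=
    setIntegral_le_integral (hint_m.sub hint_m') (Filter.Eventually.of_forall hd)
  have h2 : ∫ x in Set.Ioi m',
      (max (x - m) 0 * bachelierPsi σ T x - max (x - m') 0 * bachelierPsi σ T x)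
      = (m' - m) * ∫ x in Set.Ioi m', bachelierPsi σ T x := by
    rw [← integral_const_mul]
    refine setIntegral_congr_fun measurableSet_Ioi fun x hx => ?_
    simp only [Set.mem_Ioi] at hx
    rw [max_eq_left (by linarith), max_eq_left (by linarith)]
    ring
  have h3 : 0 < (m' - m) * ∫ x in Set.Ioi m', bachelierPsi σ T x :=
    mul_pos (by linarith) (psi_integral_Ioi_pos hσ hT m')
  linarith

lemma call_pos (hσ : 0 < σ) (hT : 0 < T) (m : ℝ) : 0 < bachelierCall σ T m := by
  rw [call_eq hσ hT m]
  have h1 : ∫ x in Set.Ioi (m + 1), bachelierPsi σ T x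
      ≤ ∫ x in Set.Ioi (m + 1), max (x - m) 0 * bachelierPsi σ T x := by
    refine setIntegral_mono_on (integrable_psi hσ hT).integrableOn
      (integrable_payoff hσ hT m).integrableOn measurableSet_Ioi fun x hx => ?_
    simp only [Set.mem_Ioi] at hx
    have hmax : (1:ℝ) ≤ max (x - m) 0 := le_max_of_le_left (by linarith)
    exact le_mul_of_one_le_left (psi_pos hσ hT x).le hmax
  have h2 : ∫ x in Set.Ioi (m + 1), max (x - m) 0 * bachelierPsi σ T x
      ≤ ∫ x, max (x - m) 0 * bachelierPsi σ T x :=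
    setIntegral_le_integral (integrable_payoff hσ hT m)
      (Filter.Eventually.of_forall fun x => mul_nonneg (le_max_right _ _) (psi_pos hσ hT x).le)
  linarith [psi_integral_Ioi_pos hσ hT (m + 1)]

lemma call_lower (hσ : 0 < σ) (hT : 0 < T) (m : ℝ) (hm : m ≤ 0) :
    (-m) * ∫ x in Set.Ioi (0:ℝ), bachelierPsi σ T x ≤ bachelierCall σ T m := by
  rw [call_eq hσ hT m]
  have h1 : ∫ x in Set.Ioi (0:ℝ), (-m) * bachelierPsi σ T x
      ≤ ∫ x in Set.Ioi (0:ℝ), max (x - m) 0 * bachelierPsi σ T x := by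
    refine setIntegral_mono_on ((integrable_psi hσ hT).const_mul _).integrableOn
      (integrable_payoff hσ hT m).integrableOn measurableSet_Ioi fun x hx => ?_
    simp only [Set.mem_Ioi] at hx
    exact mul_le_mul_of_nonneg_right (le_max_of_le_left (by linarith)) (psi_pos hσ hT x).le
  have h2 : ∫ x in Set.Ioi (0:ℝ), max (x - m) 0 * bachelierPsi σ T x
      ≤ ∫ x, max (x - m) 0 * bachelierPsi σ T x :=
    setIntegral_le_integral (integrable_payoff hσ hT m)
      (Filter.Eventually.of_forall fun x => mul_nonneg (le_max_right _ _) (psi_pos hσ hT x).le)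
  rw [integral_const_mul] at h1
  linarith

lemma call_upper (hσ : 0 < σ) (hT : 0 < T) (m : ℝ) (hm : 0 < m) :
    bachelierCall σ T m ≤ (∫ x, x ^ 2 * bachelierPsi σ T x) / m := by
  rw [call_eq hσ hT m]
  have h1 : ∀ x, max (x - m) 0 * bachelierPsi σ T x ≤ x ^ 2 * bachelierPsi σ T x / m := by
    intro x
    have h0 : max (x - m) 0 ≤ x ^ 2 / m := by
      rcases le_or_gt x m with h | h
      · rw [max_eq_right (by linarith)]
        positivity
      · rw [max_eq_left (by linarith), le_div_iff₀ hm]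
        nlinarith
    calc max (x - m) 0 * bachelierPsi σ T x ≤ (x ^ 2 / m) * bachelierPsi σ T x :=
          mul_le_mul_of_nonneg_right h0 (psi_pos hσ hT x).le
      _ = x ^ 2 * bachelierPsi σ T x / m := by ring
  have h2 := integral_mono (integrable_payoff hσ hT m)
    ((integrable_sq_mul_psi hσ hT).div_const m) h1
  rwa [integral_div] at h2

lemma call_lipschitz_aux (hσ : 0 < σ) (hT : 0 < T) (m m' : ℝ) :
    |bachelierCall σ T m - bachelierCall σ T m'| ≤ |m - m'| * ∫ x, bachelierPsi σ T x := by
  rw [call_eq hσ hT m, call_eq hσ hT m',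
    ← integral_sub (integrable_payoff hσ hT m) (integrable_payoff hσ hT m')]
  have h1 : ∀ x, |max (x - m) 0 * bachelierPsi σ T x - max (x - m') 0 * bachelierPsi σ T x|
      ≤ |m - m'| * bachelierPsi σ T x := by
    intro x
    rw [← sub_mul, abs_mul, abs_of_nonneg (psi_pos hσ hT x).le]
    refine mul_le_mul_of_nonneg_right ?_ (psi_pos hσ hT x).le
    calc |max (x - m) 0 - max (x - m') 0| ≤ |(x - m) - (x - m')| :=
          abs_max_sub_max_le_abs _ _ _
      _ = |m - m'| := by rw [show (x - m) - (x - m') = m' - m from by ring, abs_sub_comm]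
  calc |∫ x, (max (x - m) 0 * bachelierPsi σ T x - max (x - m') 0 * bachelierPsi σ T x)|
      ≤ ∫ x, |max (x - m) 0 * bachelierPsi σ T x - max (x - m') 0 * bachelierPsi σ T x| := by
        simpa [Real.norm_eq_abs] using
          norm_integral_le_integral_norm
            (fun x => max (x - m) 0 * bachelierPsi σ T x - max (x - m') 0 * bachelierPsi σ T x)
    _ ≤ ∫ x, |m - m'| * bachelierPsi σ T x :=
        integral_mono ((integrable_payoff hσ hT m).sub (integrable_payoff hσ hT m')).abs
          ((integrable_psi hσ hT).const_mul _) h1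
    _ = |m - m'| * ∫ x, bachelierPsi σ T x := integral_const_mul _ _

lemma call_continuous (hσ : 0 < σ) (hT : 0 < T) : Continuous (bachelierCall σ T) := by
  have hA : 0 ≤ ∫ x, bachelierPsi σ T x := integral_nonneg fun x => (psi_pos hσ hT x).le
  refine (LipschitzWith.of_dist_le_mul (K := (∫ x, bachelierPsi σ T x).toNNReal)
    (f := bachelierCall σ T) fun m m' => ?_).continuous
  rw [Real.dist_eq, Real.dist_eq, Real.coe_toNNReal _ hA]
  have h := call_lipschitz_aux hσ hT m m'
  linarith [h, mul_comm |m - m'| (∫ x, bachelierPsi σ T x)]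

lemma call_surj (hσ : 0 < σ) (hT : 0 < T) : ∀ y > (0:ℝ), ∃ m, bachelierCall σ T m = y := by
  intro y hy
  set M := ∫ x, x ^ 2 * bachelierPsi σ T x with hMdef
  have hM0 : 0 ≤ M := integral_nonneg fun x => mul_nonneg (sq_nonneg x) (psi_pos hσ hT x).le
  set a := M / y + 1 with hadef
  have ha0 : 0 < a := by positivity
  have hCa : bachelierCall σ T a < y := by
    refine lt_of_le_of_lt (call_upper hσ hT a ha0) ?_
    rw [div_lt_iff₀ ha0]
    have hya : y * a = M + y := by
      rw [hadef, mul_add, mul_one, mul_div_cancel₀ _ hy.ne']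
    linarith
  set q := ∫ x in Set.Ioi (0:ℝ), bachelierPsi σ T x with hqdef
  have hq : 0 < q := psi_integral_Ioi_pos hσ hT 0
  set b := -(y / q) - 1 with hbdef
  have hyq : 0 < y / q := by positivity
  have hb0 : b ≤ 0 := by rw [hbdef]; linarith
  have hCb : y < bachelierCall σ T b := by
    have h1 := call_lower hσ hT b hb0
    have h2 : (-b) * q = y + q := by
      rw [hbdef]
      field_simp
      ring
    rw [← hqdef] at h1
    rw [h2] at h1
    linarith
  have hba : b ≤ a := by linarith
  have := intermediate_value_Icc' hba (call_continuous hσ hT).continuousOn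
  obtain ⟨m, _, hm⟩ := this ⟨hCa.le, hCb.le⟩
  exact ⟨m, hm⟩

end BachelierAux

/-- Bachelier's theorem of reciprocity: (i) `C(−m) = P(m)`;
(ii) `C` is strictly decreasing onto `ℝ_{>0}` and `P` strictly increasing onto `ℝ_{>0}`;
(iii) there is a strictly decreasing self-inverse map `I : ℝ_{>0} → ℝ_{>0}` with
`P(m) = I(C(m))` for all `m`. -/
theorem bachelier_reciprocity (σ T : ℝ) (hσ : 0 < σ) (hT : 0 < T) :
    (∀ m : ℝ, bachelierCall σ T (-m) = bachelierPut σ T m)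
      ∧ StrictAnti (bachelierCall σ T)
      ∧ Set.range (bachelierCall σ T) = Set.Ioi 0
      ∧ StrictMono (bachelierPut σ T)
      ∧ Set.range (bachelierPut σ T) = Set.Ioi 0
      ∧ ∃ I : ℝ → ℝ, StrictAntiOn I (Set.Ioi 0)
          ∧ Set.MapsTo I (Set.Ioi 0) (Set.Ioi 0)
          ∧ (∀ y ∈ Set.Ioi (0 : ℝ), I (I y) = y)
          ∧ ∀ m : ℝ, bachelierPut σ T m = I (bachelierCall σ T m) := by
  have hrec : ∀ m : ℝ, bachelierCall σ T (-m) = bachelierPut σ T m := by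
    intro m
    rw [bachelierCall, bachelierPut,
      ← integral_comp_neg_Iic m (fun x => (x - -m) * bachelierPsi σ T x)]
    refine setIntegral_congr_fun measurableSet_Iic fun x hx => ?_
    rw [BachelierAux.psi_even]
    ring
  have hanti : StrictAnti (bachelierCall σ T) := BachelierAux.call_strictAnti hσ hT
  have hrangeC : Set.range (bachelierCall σ T) = Set.Ioi 0 := by
    refine Set.ext fun y => ⟨?_, ?_⟩
    · rintro ⟨m, rfl⟩
      exact BachelierAux.call_pos hσ hT m
    · intro hy
      obtain ⟨m, hm⟩ := BachelierAux.call_surj hσ hT y hy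
      exact ⟨m, hm⟩
  have hPC : bachelierPut σ T = fun m => bachelierCall σ T (-m) :=
    funext fun m => (hrec m).symm
  have hmono : StrictMono (bachelierPut σ T) := by
    intro m m' h
    rw [hPC]
    exact hanti (neg_lt_neg h)
  have hrangeP : Set.range (bachelierPut σ T) = Set.Ioi 0 := by
    rw [hPC, ← hrangeC]
    refine Set.ext fun y => ⟨?_, ?_⟩
    · rintro ⟨m, rfl⟩
      exact ⟨-m, rfl⟩
    · rintro ⟨m, rfl⟩
      exact ⟨-m, by simp⟩
  refine ⟨hrec, hanti, hrangeC, hmono, hrangeP, ?_⟩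
  have hCinj : Function.Injective (bachelierCall σ T) := hanti.injective
  set D := Function.invFun (bachelierCall σ T) with hDdef
  have hCD : ∀ y > (0:ℝ), bachelierCall σ T (D y) = y := fun y hy =>
    Function.invFun_eq (BachelierAux.call_surj hσ hT y hy)
  have hDC : ∀ m, D (bachelierCall σ T m) = m := Function.leftInverse_invFun hCinj
  refine ⟨fun y => bachelierCall σ T (-(D y)), ?_, ?_, ?_, ?_⟩
  · intro y1 h1 y2 h2 h12
    have hd : D y2 < D y1 := by
      have := (hanti.lt_iff_gt (a := D y1) (b := D y2))
      rw [hCD y1 h1, hCD y2 h2] at this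
      exact this.mp h12
    exact hanti (neg_lt_neg hd)
  · intro y _
    exact BachelierAux.call_pos hσ hT _
  · intro y hy
    show bachelierCall σ T (-(D (bachelierCall σ T (-(D y))))) = y
    rw [hDC, neg_neg]
    exact hCD y hy
  · intro m
    show bachelierPut σ T m = bachelierCall σ T (-(D (bachelierCall σ T m)))
    rw [hDC m]
    exact (hrec m).symm
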